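/- arXiv:1807.02553 — 3 statements merged into one kernel-verified Lean document; each statement's English description precedes it below -/
import Mathlib

section
/- Let J be a finite set of jobs, m ≥ 1 a natural number, and for each j ∈ J let r_j ∈ ℕ be a release time, p'_j ∈ ℕ with p'_j > 0 a processing amount, and C_j ∈ ℕ a time. Let x : J → ℕ → ℝ satisfy: 0 ≤ x(j,t) ≤ 1 for all j,t; x(j,t) = 0 whenever t < r_j; Σ_{j ∈ J} x(j,t) ≤ m for every t ∈ ℕ; and Σ_{t < C_j} x(j,t) ≥ p'_j for every j ∈ J. Then for all natural numbers a ≤ b: Σ_{j : C_j ≤ b and r_j + p'_j > a} min{ p'_j, r_j + p'_j − a } ≤ 2·m·(b − a). -/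
/-- Lemma 3.2 (with machine capacity `m` explicit): for a fractional LP solution `x`
processing each job at rate at most 1, only after its release time, with total rate at
most `m`, and processing at least `p' j` units of job `j` before `C j`, the total
truncated volume of jobs completing by `b` whose release-plus-size extends past `a`
is at most `2 * m * (b - a)`. -/
theorem stmt_3 (J : Type) [Fintype J] (m : ℕ) (hm : 1 ≤ m)
    (r p' C : J → ℕ) (hp' : ∀ j, 0 < p' j)
    (x : J → ℕ → ℝ)
    (hx01 : ∀ j t, 0 ≤ x j t ∧ x j t ≤ 1)
    (hx_rel : ∀ j t, t < r j → x j t = 0)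
    (hx_cap : ∀ t : ℕ, ∑ j : J, x j t ≤ (m : ℝ))
    (hx_done : ∀ j : J, ∑ t ∈ Finset.range (C j), x j t ≥ (p' j : ℝ)) :
    ∀ a b : ℕ, a ≤ b →
      ∑ j ∈ Finset.univ.filter (fun j : J => C j ≤ b ∧ a < r j + p' j),
          min ((p' j : ℝ)) ((r j : ℝ) + (p' j : ℝ) - (a : ℝ))
        ≤ 2 * (m : ℝ) * ((b : ℝ) - (a : ℝ)) := by
  intro a b hab
  set S := Finset.univ.filter (fun j : J => C j ≤ b ∧ a < r j + p' j) with hS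
  have key : ∀ j ∈ S,
      min ((p' j : ℝ)) ((r j : ℝ) + (p' j : ℝ) - (a : ℝ)) ≤ ∑ t ∈ Finset.Ico a b, x j t := by
    intro j hj
    simp only [hS, Finset.mem_filter] at hj
    obtain ⟨-, hCb, -⟩ := hj
    have h1 : (p' j : ℝ) ≤ ∑ t ∈ Finset.range b, x j t :=
      le_trans (hx_done j) (Finset.sum_le_sum_of_subset_of_nonneg
        (Finset.range_subset_range.2 hCb) (fun t _ _ => (hx01 j t).1))
    have h2 : ∑ t ∈ Finset.range a, x j t ≤ ((a - r j : ℕ) : ℝ) := by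
      have heq : ∑ t ∈ Finset.range a, x j t = ∑ t ∈ Finset.Ico (r j) a, x j t := by
        rw [Finset.range_eq_Ico]
        rcases le_total (r j) a with h | h
        · rw [← Finset.sum_Ico_consecutive _ (Nat.zero_le _) h]
          have hz : ∑ t ∈ Finset.Ico 0 (r j), x j t = 0 :=
            Finset.sum_eq_zero fun t ht => hx_rel j t (Finset.mem_Ico.1 ht).2
          rw [hz, zero_add]
        · have hl : ∑ t ∈ Finset.Ico 0 a, x j t = 0 :=
            Finset.sum_eq_zero fun t ht => hx_rel j t
              (by have := (Finset.mem_Ico.1 ht).2; omega)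
          have hr : ∑ t ∈ Finset.Ico (r j) a, x j t = 0 :=
            Finset.sum_eq_zero fun t ht => hx_rel j t
              (by have := Finset.mem_Ico.1 ht; omega)
          rw [hl, hr]
      rw [heq]
      calc ∑ t ∈ Finset.Ico (r j) a, x j t ≤ ∑ _t ∈ Finset.Ico (r j) a, (1 : ℝ) :=
            Finset.sum_le_sum fun t _ => (hx01 j t).2
        _ = ((a - r j : ℕ) : ℝ) := by rw [Finset.sum_const, Nat.card_Ico]; simp
    have h3 : ∑ t ∈ Finset.Ico a b, x j t
        = ∑ t ∈ Finset.range b, x j t - ∑ t ∈ Finset.range a, x j t :=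
      Finset.sum_Ico_eq_sub _ hab
    have hmin : min ((p' j : ℝ)) ((r j : ℝ) + (p' j : ℝ) - (a : ℝ))
        ≤ (p' j : ℝ) - ((a - r j : ℕ) : ℝ) := by
      rcases le_total a (r j) with h | h
      · have hz : a - r j = 0 := by omega
        rw [hz]
        have := min_le_left ((p' j : ℝ)) ((r j : ℝ) + (p' j : ℝ) - (a : ℝ))
        simpa using this
      · have hc : ((a - r j : ℕ) : ℝ) = (a : ℝ) - (r j : ℝ) := by
          rw [Nat.cast_sub h]
        rw [hc]
        have := min_le_right ((p' j : ℝ)) ((r j : ℝ) + (p' j : ℝ) - (a : ℝ))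
        linarith
    rw [h3]
    linarith
  have hnn : ∀ j ∈ Finset.univ, j ∉ S → (0 : ℝ) ≤ ∑ t ∈ Finset.Ico a b, x j t :=
    fun j _ _ => Finset.sum_nonneg fun t _ => (hx01 j t).1
  have hmpos : (0 : ℝ) ≤ (m : ℝ) := Nat.cast_nonneg m
  calc ∑ j ∈ S, min ((p' j : ℝ)) ((r j : ℝ) + (p' j : ℝ) - (a : ℝ))
      ≤ ∑ j ∈ S, ∑ t ∈ Finset.Ico a b, x j t := Finset.sum_le_sum key
    _ ≤ ∑ j ∈ Finset.univ, ∑ t ∈ Finset.Ico a b, x j t :=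
        Finset.sum_le_sum_of_subset_of_nonneg (Finset.filter_subset _ _) hnn
    _ = ∑ t ∈ Finset.Ico a b, ∑ j : J, x j t := Finset.sum_comm
    _ ≤ ∑ _t ∈ Finset.Ico a b, (m : ℝ) := Finset.sum_le_sum fun t _ => hx_cap t
    _ = ((b - a : ℕ) : ℝ) * m := by rw [Finset.sum_const, Nat.card_Ico]; simp
    _ ≤ 2 * (m : ℝ) * ((b : ℝ) - (a : ℝ)) := by
        rw [Nat.cast_sub hab]
        have hba : (a : ℝ) ≤ (b : ℝ) := Nat.cast_le.2 hab
        nlinarith [mul_nonneg hmpos (sub_nonneg.2 hba)]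
end

section
/- Let G be a finite simple graph, let α ≥ 1 be a real number, let k ≥ 2 be a natural number, and let S be a finite set of vertices of G with 2 ≤ |S| ≤ α·k and k ≤ |S|, such that e(S) ≥ L for some real L ≥ 0. Then there exists a subset T ⊆ S with |T| = k and e(T) ≥ L/(2α²). -/
open Classical in
/-- `edgesIn G S` is the number of edges of `G` with both endpoints in `S`. -/
noncomputable def edgesIn {V : Type} [Fintype V] [DecidableEq V]
    (G : SimpleGraph V) [DecidableRel G.Adj] (S : Finset V) : ℕ :=
  (G.edgeFinset.filter (fun e => ∀ v ∈ e, v ∈ S)).card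

open Classical in
lemma count_pairs {V : Type} [DecidableEq V] (S : Finset V) (k : ℕ) (hk : 2 ≤ k)
    (a b : V) (ha : a ∈ S) (hb : b ∈ S) (hab : a ≠ b) :
    ((S.powersetCard k).filter (fun T => a ∈ T ∧ b ∈ T)).card
      = (S.card - 2).choose (k - 2) := by
  have hSc : ((S.erase a).erase b).card = S.card - 2 := by
    rw [Finset.card_erase_of_mem (Finset.mem_erase.mpr ⟨hab.symm, hb⟩),
      Finset.card_erase_of_mem ha]
    omega
  rw [show (S.card - 2).choose (k - 2)
      = (((S.erase a).erase b).powersetCard (k-2)).card by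
    rw [Finset.card_powersetCard, hSc]]
  apply Finset.card_bij (fun T _ => (T.erase a).erase b)
  · intro T hT
    simp only [Finset.mem_filter, Finset.mem_powersetCard] at hT
    obtain ⟨⟨hTS, hTk⟩, haT, hbT⟩ := hT
    rw [Finset.mem_powersetCard]
    constructor
    · intro x hx
      simp only [Finset.mem_erase] at hx ⊢
      exact ⟨hx.1, hx.2.1, hTS hx.2.2⟩
    · rw [Finset.card_erase_of_mem (Finset.mem_erase.mpr ⟨hab.symm, hbT⟩),
        Finset.card_erase_of_mem haT, hTk]
      omega
  · intro T1 h1 T2 h2 heq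
    simp only [Finset.mem_filter, Finset.mem_powersetCard] at h1 h2
    ext x
    by_cases hxa : x = a
    · subst hxa; simp [h1.2.1, h2.2.1]
    by_cases hxb : x = b
    · subst hxb; simp [h1.2.2, h2.2.2]
    · constructor
      · intro hx
        have : x ∈ (T1.erase a).erase b := by simp [hxa, hxb, hx]
        rw [heq] at this
        simp only [Finset.mem_erase] at this; exact this.2.2
      · intro hx
        have : x ∈ (T2.erase a).erase b := by simp [hxa, hxb, hx]
        rw [← heq] at this
        simp only [Finset.mem_erase] at this; exact this.2.2
  · intro U hU
    rw [Finset.mem_powersetCard] at hU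
    obtain ⟨hUS, hUk⟩ := hU
    have haU : a ∉ U := fun h => by
      have := hUS h; simp only [Finset.mem_erase] at this; exact this.2.1 rfl
    have hbU : b ∉ U := fun h => by
      have := hUS h; simp only [Finset.mem_erase] at this; exact this.1 rfl
    refine ⟨insert a (insert b U), ?_, ?_⟩
    · simp only [Finset.mem_filter, Finset.mem_powersetCard]
      refine ⟨⟨?_, ?_⟩, by simp, by simp⟩
      · intro x hx
        simp only [Finset.mem_insert] at hx
        rcases hx with rfl | rfl | hx
        · exact ha
        · exact hb
        · exact (Finset.erase_subset _ _ (Finset.erase_subset _ _ (hUS hx)))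
      · rw [Finset.card_insert_of_notMem (by simp [hab, haU]),
          Finset.card_insert_of_notMem hbU, hUk]
        omega
    · ext x
      simp only [Finset.mem_erase, Finset.mem_insert]
      constructor
      · rintro ⟨hxb, hxa, rfl | rfl | hx⟩
        · exact absurd rfl hxa
        · exact absurd rfl hxb
        · exact hx
      · intro hx
        exact ⟨fun h => hbU (h ▸ hx), fun h => haU (h ▸ hx), Or.inr (Or.inr hx)⟩

open Classical in
lemma double_count {V : Type} [Fintype V] [DecidableEq V]
    (G : SimpleGraph V) [DecidableRel G.Adj] (S : Finset V) (k : ℕ) (hk : 2 ≤ k) :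
    ∑ T ∈ S.powersetCard k, edgesIn G T
      = edgesIn G S * (S.card - 2).choose (k - 2) := by
  set ES := G.edgeFinset.filter (fun e => ∀ v ∈ e, v ∈ S) with hES
  have step1 : ∀ T ∈ S.powersetCard k,
      edgesIn G T = (ES.filter (fun e => ∀ v ∈ e, v ∈ T)).card := by
    intro T hT
    rw [Finset.mem_powersetCard] at hT
    unfold edgesIn
    rw [hES, Finset.filter_filter]
    congr 1
    apply Finset.filter_congr
    intro e _
    exact ⟨fun h => ⟨fun v hv => hT.1 (h v hv), h⟩, fun h => h.2⟩
  rw [Finset.sum_congr rfl step1]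
  have step2 : ∀ T ∈ S.powersetCard k,
      (ES.filter (fun e => ∀ v ∈ e, v ∈ T)).card
        = ∑ e ∈ ES, if (∀ v ∈ e, v ∈ T) then 1 else 0 := by
    intro T _
    rw [Finset.card_filter]
  rw [Finset.sum_congr rfl step2, Finset.sum_comm]
  have step3 : ∀ e ∈ ES,
      (∑ T ∈ S.powersetCard k, if (∀ v ∈ e, v ∈ T) then 1 else 0)
        = (S.card - 2).choose (k - 2) := by
    intro e he
    induction e using Sym2.ind with
    | _ a b =>
      rw [hES, Finset.mem_filter, SimpleGraph.mem_edgeFinset,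
        SimpleGraph.mem_edgeSet] at he
      obtain ⟨hadj, hmem⟩ := he
      have ha : a ∈ S := hmem a (Sym2.mem_mk_left a b)
      have hb : b ∈ S := hmem b (Sym2.mem_mk_right a b)
      rw [← Finset.card_filter]
      rw [show (Finset.filter (fun T => ∀ v ∈ (s(a,b) : Sym2 V), v ∈ T)
            (S.powersetCard k))
          = Finset.filter (fun T => a ∈ T ∧ b ∈ T) (S.powersetCard k) by
        apply Finset.filter_congr
        intro T _
        simp [Sym2.mem_iff, forall_eq_or_imp]]
      exact count_pairs S k hk a b ha hb hadj.ne
  rw [Finset.sum_congr rfl step3, Finset.sum_const, smul_eq_mul]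
  rfl

set_option maxHeartbeats 1000000 in
/-- From a set `S` of at most `α·k` vertices (and at least `k ≥ 2` of them) spanning
at least `L` edges, one can extract a `k`-vertex subset spanning at least `L/(2α²)`
edges. -/
theorem stmt_8 {V : Type} [Fintype V] [DecidableEq V]
    (G : SimpleGraph V) [DecidableRel G.Adj]
    (α : ℝ) (hα : 1 ≤ α) (k : ℕ) (hk : 2 ≤ k)
    (S : Finset V) (hS2 : 2 ≤ S.card) (hSαk : (S.card : ℝ) ≤ α * k) (hkS : k ≤ S.card)
    (L : ℝ) (hL0 : 0 ≤ L) (hL : L ≤ (edgesIn G S : ℝ)) :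
    ∃ T ⊆ S, T.card = k ∧ L / (2 * α ^ 2) ≤ (edgesIn G T : ℝ) := by
  classical
  set n := S.card with hn
  set Cn := n.choose k with hCn
  set Cd := (n - 2).choose (k - 2) with hCd
  -- choose identity
  obtain ⟨m, hm⟩ : ∃ m, n = m + 2 := ⟨n - 2, by omega⟩
  obtain ⟨j, hj⟩ : ∃ j, k = j + 2 := ⟨k - 2, by omega⟩
  have hid : Cn * ((j+2)*(j+1)) = ((m+2)*(m+1)) * Cd := by
    have h1 := Nat.add_one_mul_choose_eq (m+1) (j+1)
    have h2 := Nat.add_one_mul_choose_eq m j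
    have key : (m+2).choose (j+2) * ((j+2)*(j+1)) = ((m+2)*(m+1)) * m.choose j := by
      calc (m+2).choose (j+2) * ((j+2)*(j+1))
          = ((m+2).choose (j+2) * (j+2))*(j+1) := by ring
        _ = ((m+1+1) * (m+1).choose (j+1)) * (j+1) := by congr 1; exact h1.symm
        _ = (m+2) * ((m+1).choose (j+1) * (j+1)) := by ring
        _ = (m+2) * ((m+1) * m.choose j) := by rw [← h2]
        _ = ((m+2)*(m+1)) * m.choose j := by ring
    rw [hCn, hCd, hm, hj]
    simpa using key
  have hCnpos : 0 < Cn := Nat.choose_pos hkS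
  have hTne : (S.powersetCard k).Nonempty := by
    rw [Finset.powersetCard_nonempty]
    exact hkS
  have hcard𝒯 : (S.powersetCard k).card = Cn := Finset.card_powersetCard k S
  have hsum : ∑ T ∈ S.powersetCard k, (edgesIn G T : ℝ)
      = (edgesIn G S : ℝ) * Cd := by
    rw [← Nat.cast_sum]
    rw [double_count G S k hk]
    push_cast
    rfl
  have havg : ∃ T ∈ S.powersetCard k,
      ((edgesIn G S : ℝ) * Cd) / Cn ≤ (edgesIn G T : ℝ) := by
    apply Finset.exists_le_of_sum_le hTne
    rw [Finset.sum_const, hcard𝒯, hsum, nsmul_eq_mul]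
    rw [mul_div_cancel₀]
    positivity
  obtain ⟨T, hT, hTval⟩ := havg
  rw [Finset.mem_powersetCard] at hT
  refine ⟨T, hT.1, hT.2, ?_⟩
  refine le_trans ?_ hTval
  have hE0 : (0:ℝ) ≤ (edgesIn G S : ℝ) := Nat.cast_nonneg _
  have hα0 : (0:ℝ) < α := lt_of_lt_of_le one_pos hα
  have hCnR : (0:ℝ) < (Cn : ℝ) := by exact_mod_cast hCnpos
  have hmR : (n:ℝ) = m + 2 := by exact_mod_cast congrArg (Nat.cast : ℕ → ℝ) hm
  have hjR : (k:ℝ) = j + 2 := by exact_mod_cast congrArg (Nat.cast : ℕ → ℝ) hj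
  have hidR : (Cn : ℝ) * (k * (k-1)) = (n * (n-1)) * Cd := by
    have : (Cn:ℝ) * ((j+2)*(j+1)) = ((m+2)*(m+1)) * Cd := by exact_mod_cast hid
    rw [hmR, hjR]
    ring_nf
    ring_nf at this
    linarith
  have hnk : (n:ℝ) ≤ α * k := hSαk
  have hkn : (k:ℝ) ≤ n := by exact_mod_cast hkS
  have hk2 : (2:ℝ) ≤ k := by exact_mod_cast hk
  have hCd0 : (0:ℝ) ≤ (Cd:ℝ) := Nat.cast_nonneg _
  have hkey : (Cn:ℝ) ≤ 2 * α^2 * Cd := by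
    have hkk : (0:ℝ) < (k:ℝ) * ((k:ℝ)-1) := by nlinarith
    have hnn : (n:ℝ) * ((n:ℝ)-1) ≤ 2 * α^2 * ((k:ℝ) * ((k:ℝ)-1)) := by
      have h1 : (n:ℝ) * ((n:ℝ)-1) ≤ (n:ℝ) * (n:ℝ) := by nlinarith
      have h2 : (n:ℝ) * (n:ℝ) ≤ (α*k) * (α*k) := by
        apply mul_le_mul hnk hnk (by positivity) (by positivity)
      have h3 : (α*k) * (α*k) = α^2*((k:ℝ)*(k:ℝ)) := by ring
      have h4 : (k:ℝ)*(k:ℝ) ≤ 2*((k:ℝ)*((k:ℝ)-1)) := by nlinarith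
      have h5 : α^2 * ((k:ℝ)*(k:ℝ)) ≤ α^2 * (2*((k:ℝ)*((k:ℝ)-1))) :=
        mul_le_mul_of_nonneg_left h4 (sq_nonneg α)
      linarith
    apply le_of_mul_le_mul_right _ hkk
    calc (Cn:ℝ) * ((k:ℝ) * ((k:ℝ)-1)) = ((n:ℝ) * ((n:ℝ)-1)) * Cd := hidR
      _ ≤ (2 * α^2 * ((k:ℝ) * ((k:ℝ)-1))) * Cd := mul_le_mul_of_nonneg_right hnn hCd0
      _ = 2 * α^2 * Cd * ((k:ℝ) * ((k:ℝ)-1)) := by ring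
  rw [div_le_div_iff₀ (by positivity) hCnR]
  exact (mul_le_mul hL hkey hCnR.le hE0).trans_eq (by ring)
end

section
/- Let m ≥ 1 be a natural number. For each i ∈ {1,…,m}, let P_i be a finite set of points in ℝ², where each p ∈ P_i has coordinates (x_p, y_p) and a demand d_p > 0. Let R be a finite set of axis-parallel rectangles, where each r ∈ R is the region [0, x_r] × [y¹_r, y²_r] and has, for each i, a capacity c(i,r) > 0. For p ∈ P_i define the 4-dimensional point φ(i,p) = (2i + 1/2, x_p, y_p, d_p) ∈ ℝ⁴, and for r ∈ R define the hyper-4cuboid v_r = ⋃_{i=1}^m [2i, 2i+1] × [0, x_r] × [y¹_r, y²_r] × [0, c(i,r)] ⊆ ℝ⁴. Then for every subset S ⊆ R the following are equivalent: (a) for every i and every p ∈ P_i there exists r ∈ S such that (x_p, y_p) ∈ [0, x_r] × [y¹_r, y²_r] and c(i,r) ≥ d_p; (b) for every i and every p ∈ P_i, the point φ(i,p) lies in ⋃_{r ∈ S} v_r. -/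
open Set in
/-- Core correspondence of Lemma 3.3 (heavy instance of PR2C ↦ hyper-4cuboid covering):
for `m` planar point sets with demands and a common set of rectangles abutting the
y-axis with per-instance capacities, a subset `S` of rectangles covers every point by
a single rectangle of sufficient capacity iff the lifted 4-dimensional points
`φ(i,p) = (2i + 1/2, x_p, y_p, d_p)` are covered by the hyper-4cuboids
`v_r = ⋃_i [2i,2i+1] × [0,x_r] × [y¹_r,y²_r] × [0,c(i,r)]`. -/
theorem stmt_10 {ι ρ : Type} (m : ℕ) (hm : 1 ≤ m)
    (P : Fin m → Finset ι) (px py dp : ι → ℝ)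
    (hdp : ∀ i : Fin m, ∀ p ∈ P i, 0 < dp p)
    (R : Finset ρ) (xr y1 y2 : ρ → ℝ) (c : Fin m → ρ → ℝ)
    (hc : ∀ i : Fin m, ∀ r ∈ R, 0 < c i r)
    (φ : Fin m → ι → ℝ × ℝ × ℝ × ℝ)
    (hφ : ∀ i p, φ i p = (2 * ((i : ℕ) : ℝ) + 1 / 2, px p, py p, dp p))
    (v : ρ → Set (ℝ × ℝ × ℝ × ℝ))
    (hv : ∀ r, v r = ⋃ i : Fin m,
      (Icc (2 * ((i : ℕ) : ℝ)) (2 * ((i : ℕ) : ℝ) + 1)) ×ˢ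
        (Icc (0 : ℝ) (xr r)) ×ˢ (Icc (y1 r) (y2 r)) ×ˢ (Icc (0 : ℝ) (c i r))) :
    ∀ S ⊆ R,
      ((∀ i : Fin m, ∀ p ∈ P i, ∃ r ∈ S,
          px p ∈ Icc (0 : ℝ) (xr r) ∧ py p ∈ Icc (y1 r) (y2 r) ∧ dp p ≤ c i r) ↔
        (∀ i : Fin m, ∀ p ∈ P i, φ i p ∈ ⋃ r ∈ S, v r)) := by
  intro S hS
  constructor
  · intro h i p hp
    obtain ⟨r, hr, hx, hy, hcap⟩ := h i p hp
    refine mem_iUnion₂.2 ⟨r, hr, ?_⟩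
    rw [hv, hφ]
    refine mem_iUnion.2 ⟨i, ?_⟩
    refine ⟨⟨le_refl _ |>.trans (by linarith), by linarith⟩, hx, hy,
      ⟨(hdp i p hp).le, hcap⟩⟩
  · intro h i p hp
    obtain ⟨r, hr, hmem⟩ := mem_iUnion₂.1 (h i p hp)
    rw [hv, hφ] at hmem
    obtain ⟨j, hj⟩ := mem_iUnion.1 hmem
    obtain ⟨⟨h1, h2⟩, hx, hy, _, hcap⟩ := hj
    have hij : i = j := by
      have e1 : ((i : ℕ) : ℝ) < ((j : ℕ) : ℝ) + 1 := by linarith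
      have e2 : ((j : ℕ) : ℝ) < ((i : ℕ) : ℝ) + 1 := by linarith
      have n1 : (i : ℕ) < (j : ℕ) + 1 := by exact_mod_cast e1
      have n2 : (j : ℕ) < (i : ℕ) + 1 := by exact_mod_cast e2
      exact Fin.ext (by omega)
    subst hij
    exact ⟨r, hr, hx, hy, hcap⟩
end
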